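/- Every irrational real number is a horospherical limit point of SL₂(ℤ): for every irrational z ∈ ℝ and every r > 0 there exists γ ∈ SL₂(ℤ) such that |γ·i − (z + r·i)| < r, where γ·i denotes the image of i ∈ ℍ under the Möbius action of γ, regarded as an element of ℂ. That is, every open horoball based at z meets the orbit SL₂(ℤ)·i. -/

import Mathlib

open Matrix Complex

/-- The image of `i ∈ ℍ` under the Möbius action of `γ ∈ SL₂(ℤ)`, as a complex number. -/
noncomputable def moebiusActI (γ : Matrix.SpecialLinearGroup (Fin 2) ℤ) : ℂ :=
  (((γ : Matrix (Fin 2) (Fin 2) ℤ) 0 0 : ℂ) * Complex.I +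
      ((γ : Matrix (Fin 2) (Fin 2) ℤ) 0 1 : ℂ)) /
    (((γ : Matrix (Fin 2) (Fin 2) ℤ) 1 0 : ℂ) * Complex.I +
      ((γ : Matrix (Fin 2) (Fin 2) ℤ) 1 1 : ℂ))

set_option maxHeartbeats 1000000 in
lemma horoball_key (z r : ℝ) (hr : 0 < r) (p b q d : ℤ)
    (hq1 : 1 ≤ q) (hdet : p * d - b * q = 1) (hd0 : 0 ≤ d) (hdq : d < q)
    (happrox : |z - (p:ℝ)/(q:ℝ)| < 1/(q:ℝ)^2) (hbig : 5/r < (q:ℝ)) :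
    ‖((p:ℂ) * Complex.I + b) / ((q:ℂ) * Complex.I + d)
      - ((z : ℂ) + (r : ℂ) * Complex.I)‖ < r := by
  have hQ1 : (1:ℝ) ≤ (q:ℝ) := by exact_mod_cast hq1
  have hQ0 : (0:ℝ) < (q:ℝ) := by linarith
  have hD0 : (0:ℝ) ≤ (d:ℝ) := by exact_mod_cast hd0
  have hDQ : (d:ℝ) ≤ (q:ℝ) := by exact_mod_cast hdq.le
  have hdet' : (p:ℝ) * d - b * q = 1 := by exact_mod_cast congrArg (Int.cast : ℤ → ℝ) hdet
  have hs0 : (0:ℝ) < (q:ℝ)^2 + (d:ℝ)^2 := by positivity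
  have hsQ : (q:ℝ)^2 ≤ (q:ℝ)^2 + (d:ℝ)^2 := by nlinarith
  have hs2Q : (q:ℝ)^2 + (d:ℝ)^2 ≤ 2 * (q:ℝ)^2 := by nlinarith
  obtain ⟨x, hx⟩ : ∃ x : ℝ, x = ((p:ℝ) * q + (b:ℝ) * d) / ((q:ℝ)^2 + (d:ℝ)^2) := ⟨_, rfl⟩
  obtain ⟨y, hy⟩ : ∃ y : ℝ, y = 1 / ((q:ℝ)^2 + (d:ℝ)^2) := ⟨_, rfl⟩
  have hden1 : ((q:ℂ) * Complex.I + d) ≠ 0 := by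
    intro h
    have h2 := congrArg Complex.im h
    simp at h2
    simp [h2] at hQ0
  have hden2 : ((q:ℂ)^2 + (d:ℂ)^2) ≠ 0 := by
    have he : ((q:ℂ)^2 + (d:ℂ)^2) = (((q:ℝ)^2 + (d:ℝ)^2 : ℝ):ℂ) := by push_cast; ring
    rw [he]
    exact_mod_cast hs0.ne'
  have hval : ((p:ℂ) * Complex.I + b) / ((q:ℂ) * Complex.I + d)
      = ((x:ℝ):ℂ) + ((y:ℝ):ℂ) * Complex.I := by
    have h' : (p:ℂ)*d - b*q = 1 := by exact_mod_cast congrArg (Int.cast : ℤ → ℂ) hdet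
    have hmain : ((p:ℂ) * Complex.I + b) / ((q:ℂ) * Complex.I + d)
        = (((p:ℂ)*q + b*d) + Complex.I) / ((q:ℂ)^2 + (d:ℂ)^2) := by
      rw [div_eq_div_iff hden1 hden2]
      linear_combination (-(q:ℂ)) * Complex.I_sq + ((d:ℂ)*Complex.I - q) * h'
    rw [hmain, hx, hy]
    push_cast
    field_simp
  rw [hval]
  have hdiff : ((x:ℝ):ℂ) + ((y:ℝ):ℂ) * Complex.I - ((z:ℂ) + (r:ℂ) * Complex.I)
      = (((x - z : ℝ)):ℂ) + (((y - r : ℝ)):ℂ) * Complex.I := by push_cast; ring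
  rw [hdiff, Complex.norm_add_mul_I]
  refine (Real.sqrt_lt' hr).mpr ?_
  have hQr : 5 < (q:ℝ) * r := by
    calc (5:ℝ) = (5 / r) * r := by field_simp
      _ < (q:ℝ) * r := by exact mul_lt_mul_of_pos_right hbig hr
  have hQ2r : 5 < (q:ℝ)^2 * r := by nlinarith
  have hxpq : x - (p:ℝ)/(q:ℝ) = -(d:ℝ) / ((q:ℝ) * ((q:ℝ)^2 + (d:ℝ)^2)) := by
    have hsne : ((q:ℝ)^2 + (d:ℝ)^2) ≠ 0 := hs0.ne'
    have hqne : ((q:ℝ)) ≠ 0 := hQ0.ne'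
    have h8 : x - (p:ℝ)/(q:ℝ)
        = (((p:ℝ)*q + b*d)*q - ((q:ℝ)^2+(d:ℝ)^2)*p) / (((q:ℝ)^2+(d:ℝ)^2)*q) := by
      rw [hx, div_sub_div _ _ hsne hqne]
    rw [h8, show ((p:ℝ)*q + (b:ℝ)*d)*q - ((q:ℝ)^2+(d:ℝ)^2)*p = -(d:ℝ) from by
      linear_combination (-(d:ℝ)) * hdet', mul_comm ((q:ℝ)^2+(d:ℝ)^2) ((q:ℝ))]
  have hx1 : |x - (p:ℝ)/(q:ℝ)| ≤ 1 / (q:ℝ)^2 := by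
    rw [hxpq, abs_div, abs_neg, _root_.abs_of_nonneg hD0,
      _root_.abs_of_pos (by positivity : (0:ℝ) < (q:ℝ) * ((q:ℝ)^2 + (d:ℝ)^2))]
    rw [div_le_div_iff₀ (by positivity) (by positivity)]
    nlinarith
  have hxz : |x - z| < 2 / (q:ℝ)^2 := by
    have h4 := abs_sub_le x ((p:ℝ)/(q:ℝ)) z
    have h5 : |(p:ℝ)/(q:ℝ) - z| < 1/(q:ℝ)^2 := by rw [abs_sub_comm]; exact happrox
    calc |x - z| ≤ |x - (p:ℝ)/(q:ℝ)| + |(p:ℝ)/(q:ℝ) - z| := h4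
      _ < 1/(q:ℝ)^2 + 1/(q:ℝ)^2 := by linarith
      _ = 2/(q:ℝ)^2 := by ring
  have hxz2 : (x - z)^2 < 4 / (q:ℝ)^4 := by
    have h1 : (x-z)^2 = |x-z|^2 := (_root_.sq_abs _).symm
    have h6 : (2:ℝ)/(q:ℝ)^2 > 0 := by positivity
    rw [h1]
    have h7 : |x-z|^2 < (2/(q:ℝ)^2)^2 := by
      apply pow_lt_pow_left₀ hxz (abs_nonneg _)
      norm_num
    calc |x-z|^2 < (2/(q:ℝ)^2)^2 := h7
      _ = 4/(q:ℝ)^4 := by ring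
  have hy1 : y ≤ 1 / (q:ℝ)^2 := by
    rw [hy]; exact one_div_le_one_div_of_le (by positivity) hsQ
  have hy2 : 1 / (2 * (q:ℝ)^2) ≤ y := by
    rw [hy]; exact one_div_le_one_div_of_le hs0 hs2Q
  have hy0 : 0 < y := by rw [hy]; positivity
  have e3 : (5:ℝ) / (q:ℝ)^4 < r / (q:ℝ)^2 := by
    rw [div_lt_div_iff₀ (by positivity) (by positivity)]
    have h9 : 0 < (q:ℝ)^2 * ((q:ℝ)^2*r - 5) := mul_pos (by positivity) (by linarith)
    nlinarith [h9]
  have key : (x - z)^2 + y^2 < 2 * r * y := by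
    have e1 : y^2 ≤ 1 / (q:ℝ)^4 := by
      have : y^2 ≤ (1/(q:ℝ)^2)^2 := pow_le_pow_left₀ hy0.le hy1 2
      calc y^2 ≤ (1/(q:ℝ)^2)^2 := this
        _ = 1/(q:ℝ)^4 := by ring
    have e2 : r / (q:ℝ)^2 ≤ 2 * r * y := by
      calc r / (q:ℝ)^2 = 2 * r * (1/(2*(q:ℝ)^2)) := by ring
        _ ≤ 2 * r * y := by nlinarith
    calc (x-z)^2 + y^2 < 4/(q:ℝ)^4 + 1/(q:ℝ)^4 := by linarith
      _ = 5/(q:ℝ)^4 := by ring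
      _ < r/(q:ℝ)^2 := e3
      _ ≤ 2*r*y := e2
  nlinarith [key]

lemma exists_good_approx (z : ℝ) (hz : Irrational z) (N : ℕ) :
    ∃ ρ : ℚ, |z - ρ| < 1 / (ρ.den : ℝ)^2 ∧ N < ρ.den := by
  by_contra hcon
  push_neg at hcon
  have hS := Real.infinite_rat_abs_sub_lt_one_div_den_sq_of_irrational hz
  obtain ⟨M, hM⟩ := exists_nat_gt ((|z| + 1) * N)
  apply hS
  have hinj : Function.Injective (fun q : ℚ => (q.num, (q.den : ℤ))) := by
    intro q q' h
    simp only [Prod.mk.injEq] at h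
    exact Rat.ext h.1 (by exact_mod_cast h.2)
  have hsub : {q : ℚ | |z - q| < 1 / (q.den : ℝ)^2} ⊆
      (fun q : ℚ => (q.num, (q.den : ℤ))) ⁻¹' (Set.Icc (-(M:ℤ), 0) ((M:ℤ), (N:ℤ))) := by
    intro q hq
    simp only [Set.mem_setOf_eq] at hq
    have hdN : q.den ≤ N := hcon q hq
    have hd1 : (1:ℝ) ≤ q.den := by exact_mod_cast q.pos
    have h1 : |z - q| < 1 := by
      refine lt_of_lt_of_le hq ?_
      rw [div_le_one (by positivity)]
      nlinarith
    have habsq : |(q:ℝ)| ≤ |z| + 1 := by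
      have h2 := abs_sub_abs_le_abs_sub (q:ℝ) z
      rw [abs_sub_comm] at h1
      linarith
    have hnum : |(q.num : ℝ)| ≤ (|z| + 1) * N := by
      have he : |(q:ℝ)| = |(q.num:ℝ)| / q.den := by
        rw [Rat.cast_def, abs_div, _root_.abs_of_nonneg (by positivity : (0:ℝ) ≤ (q.den:ℝ))]
      rw [he, div_le_iff₀ (by positivity)] at habsq
      calc |(q.num:ℝ)| ≤ (|z|+1) * q.den := habsq
        _ ≤ (|z|+1) * N := by
            apply mul_le_mul_of_nonneg_left (by exact_mod_cast hdN) (by positivity)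
    have hnum' : |q.num| ≤ (M:ℤ) := by
      have h3 : (|q.num|:ℝ) ≤ M := by push_cast; linarith
      exact_mod_cast h3
    obtain ⟨hl, hu⟩ := abs_le.mp hnum'
    simp only [Set.mem_preimage, Set.mem_Icc, Prod.le_def]
    refine ⟨⟨hl, ?_⟩, hu, by exact_mod_cast hdN⟩
    exact_mod_cast Nat.zero_le q.den
  exact Set.Finite.subset (Set.Finite.preimage hinj.injOn (Set.finite_Icc _ _)) hsub


/-- Every irrational real number is a horospherical limit point of `SL₂(ℤ)`: every
open horoball based at an irrational `z` meets the orbit `SL₂(ℤ)·i`. -/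
theorem irrational_is_horospherical_limit_point
    (z : ℝ) (hz : Irrational z) (r : ℝ) (hr : 0 < r) :
    ∃ γ : Matrix.SpecialLinearGroup (Fin 2) ℤ,
      ‖moebiusActI γ - ((z : ℂ) + (r : ℂ) * Complex.I)‖ < r := by
  obtain ⟨N, hN⟩ := exists_nat_gt (5 / r)
  obtain ⟨ρ, hρ, hden⟩ := exists_good_approx z hz N
  obtain ⟨p, hp⟩ : ∃ p : ℤ, p = ρ.num := ⟨_, rfl⟩
  obtain ⟨q, hq⟩ : ∃ q : ℤ, q = (ρ.den : ℤ) := ⟨_, rfl⟩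
  have hq1 : (1:ℤ) ≤ q := by rw [hq]; exact_mod_cast ρ.pos
  have hq0 : (0:ℤ) < q := hq1
  have hgcd : Int.gcd p q = 1 := by rw [hp, hq]; exact ρ.reduced
  have hbez : p * Int.gcdA p q + q * Int.gcdB p q = 1 := by
    have h0 := Int.gcd_eq_gcd_ab p q
    rw [hgcd] at h0
    exact_mod_cast h0.symm
  obtain ⟨d₀, hd₀⟩ : ∃ d₀ : ℤ, d₀ = Int.gcdA p q := ⟨_, rfl⟩
  obtain ⟨v, hv⟩ : ∃ v : ℤ, v = Int.gcdB p q := ⟨_, rfl⟩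
  obtain ⟨k, hk⟩ : ∃ k : ℤ, k = d₀ / q := ⟨_, rfl⟩
  obtain ⟨d, hd⟩ : ∃ d : ℤ, d = d₀ % q := ⟨_, rfl⟩
  obtain ⟨b, hb⟩ : ∃ b : ℤ, b = -v - p * k := ⟨_, rfl⟩
  have hbez' : p * d₀ + q * v = 1 := by rw [hd₀, hv]; exact hbez
  have hdk : d = d₀ - q * k := by rw [hd, hk]; exact Int.emod_def d₀ q
  have hdet : p * d - b * q = 1 := by rw [hdk, hb]; ring_nf; linarith [hbez']
  have hd0 : 0 ≤ d := by rw [hd]; exact Int.emod_nonneg d₀ (by omega)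
  have hdq : d < q := by rw [hd]; exact Int.emod_lt_of_pos d₀ hq0
  have hdet2 : Matrix.det !![p, b; q, d] = 1 := by
    rw [Matrix.det_fin_two_of]; linarith
  refine ⟨⟨!![p, b; q, d], hdet2⟩, ?_⟩
  have hentries : moebiusActI ⟨!![p, b; q, d], hdet2⟩
      = ((p:ℂ) * Complex.I + b) / ((q:ℂ) * Complex.I + d) := by
    simp [moebiusActI]
  rw [hentries]
  apply horoball_key z r hr p b q d hq1 hdet hd0 hdq
  · have hcast : ((q:ℤ):ℝ) = (ρ.den:ℝ) := by rw [hq]; push_cast; ring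
    have hcast2 : ((p:ℤ):ℝ) / ((q:ℤ):ℝ) = (ρ:ℝ) := by
      rw [hp, hcast, Rat.cast_def]
    rw [hcast2, hcast]
    exact hρ
  · have h5 : (5:ℝ)/r < (N:ℝ) := hN
    have h6 : (N:ℝ) < (ρ.den:ℝ) := by exact_mod_cast hden
    have hcast : ((q:ℤ):ℝ) = (ρ.den:ℝ) := by rw [hq]; push_cast; ring
    rw [hcast]; linarith
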